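/- The sum 4·∑_{n=1}^∞ (-1)ⁿ/(2n-1)² is nonzero (it equals -4 times Catalan's constant). -/
import Mathlib

open Finset Filter

private lemma tele_hasSum : HasSum (fun n : ℕ => 1 / ((n : ℝ) + 1) - 1 / ((n : ℝ) + 2)) 1 := by
  have hnn : ∀ n : ℕ, (0:ℝ) ≤ 1 / ((n : ℝ) + 1) - 1 / ((n : ℝ) + 2) := by
    intro n
    have : 1 / ((n : ℝ) + 2) ≤ 1 / ((n : ℝ) + 1) :=
      one_div_le_one_div_of_le (by positivity) (by linarith)
    linarith
  rw [hasSum_iff_tendsto_nat_of_nonneg hnn]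
  have heq : ∀ N : ℕ, ∑ n ∈ Finset.range N, (1 / ((n : ℝ) + 1) - 1 / ((n : ℝ) + 2))
      = 1 - 1 / ((N : ℝ) + 1) := by
    intro N
    induction N with
    | zero => simp
    | succ k ih =>
      rw [Finset.sum_range_succ, ih]
      push_cast
      have hk1 : ((k:ℝ) + 1) ≠ 0 := by positivity
      have hk2 : ((k:ℝ) + 2) ≠ 0 := by positivity
      field_simp
      ring
  simp only [heq]
  have h2 : Tendsto (fun N : ℕ => 1 / ((N : ℝ) + 1)) atTop (nhds 0) :=
    tendsto_one_div_add_atTop_nhds_zero_nat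
  simpa using (tendsto_const_nhds (x := (1:ℝ))).sub h2

private lemma abs_tsum_le' {f : ℕ → ℝ} (h : Summable fun n => |f n|) :
    |∑' n, f n| ≤ ∑' n, |f n| := by
  simpa [Real.norm_eq_abs] using
    norm_tsum_le_tsum_norm (f := f) (by simpa [Real.norm_eq_abs] using h)

set_option maxHeartbeats 1000000 in
/-- The commutator sum `4 ∑_{n=1}^∞ (-1)ⁿ/(2n-1)²` is nonzero. -/
theorem commutator_sum_ne_zero :
    4 * ∑' n : ℕ, ((-1 : ℝ)) ^ (n + 1) / (2 * (n : ℝ) + 1) ^ 2 ≠ 0 := by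
  have habs : ∀ n : ℕ, |((-1 : ℝ)) ^ (n + 1) / (2 * (n : ℝ) + 1) ^ 2|
      = 1 / (2 * (n : ℝ) + 1) ^ 2 := by
    intro n
    rw [abs_div, abs_pow, abs_neg, abs_one, one_pow]
    congr 1
    rw [abs_of_pos]
    positivity
  have hsummable : Summable (fun n : ℕ => ((-1 : ℝ)) ^ (n + 1) / (2 * (n : ℝ) + 1) ^ 2) := by
    apply Summable.of_abs
    have hg : Summable (fun n : ℕ => 1 / ((n : ℝ) + 1) ^ 2) := by
      have h : Summable (fun n : ℕ => 1 / ((n:ℝ) ^ 2)) := by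
        rw [Real.summable_one_div_nat_pow]; norm_num
      exact_mod_cast (summable_nat_add_iff 1).2 h
    apply Summable.of_nonneg_of_le (fun n => abs_nonneg _) _ hg
    intro n
    rw [habs]
    apply one_div_le_one_div_of_le (by positivity)
    nlinarith [Nat.cast_nonneg (α := ℝ) n, sq_nonneg ((n:ℝ))]
  have hsplit := Summable.tsum_eq_zero_add hsummable
  have hf0 : ((-1 : ℝ)) ^ (0 + 1) / (2 * ((0:ℕ) : ℝ) + 1) ^ 2 = -1 := by norm_num
  have htail_summable : Summable (fun n : ℕ =>
      ((-1 : ℝ)) ^ ((n + 1) + 1) / (2 * ((n:ℕ) + 1 : ℝ) + 1) ^ 2) := by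
    exact_mod_cast (summable_nat_add_iff 1).2 hsummable
  -- bound the tail
  have hbound : ∀ n : ℕ, |((-1 : ℝ)) ^ ((n + 1) + 1) / (2 * ((n : ℝ) + 1) + 1) ^ 2|
      ≤ (1/4) * (1 / ((n : ℝ) + 1) - 1 / ((n : ℝ) + 2)) := by
    intro n
    have := habs (n + 1)
    push_cast at this
    rw [this]
    have key : (1/4) * (1 / ((n:ℝ)+1) - 1 / ((n:ℝ)+2)) = 1 / (4*(((n:ℝ)+1)*((n:ℝ)+2))) := by
      have h1 : ((n:ℝ) + 1) ≠ 0 := by positivity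
      have h2 : ((n:ℝ) + 2) ≠ 0 := by positivity
      field_simp
      ring
    rw [key]
    apply one_div_le_one_div_of_le (by positivity)
    nlinarith [sq_nonneg ((n:ℝ))]
  have habs_tail : |∑' n : ℕ, ((-1 : ℝ)) ^ ((n + 1) + 1) / (2 * ((n:ℕ) + 1 : ℝ) + 1) ^ 2|
      ≤ 1/4 := by
    calc |∑' n : ℕ, ((-1 : ℝ)) ^ ((n + 1) + 1) / (2 * ((n:ℕ) + 1 : ℝ) + 1) ^ 2|
        ≤ ∑' n : ℕ, |((-1 : ℝ)) ^ ((n + 1) + 1) / (2 * ((n:ℕ) + 1 : ℝ) + 1) ^ 2| :=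
abs_tsum_le' htail_summable.abs
      _ ≤ ∑' n : ℕ, (1/4) * (1 / ((n : ℝ) + 1) - 1 / ((n : ℝ) + 2)) := by
          apply Summable.tsum_le_tsum hbound htail_summable.abs (tele_hasSum.mul_left (1/4)).summable
      _ = 1/4 := by
          rw [(tele_hasSum.mul_left (1/4)).tsum_eq]; norm_num
  have hneg : ∑' n : ℕ, ((-1 : ℝ)) ^ (n + 1) / (2 * (n : ℝ) + 1) ^ 2 < 0 := by
    push_cast at hsplit
    rw [hsplit]
    norm_num
    have := abs_le.1 habs_tail
    push_cast at this
    linarith [this.2]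
  exact mul_ne_zero (by norm_num) (ne_of_lt hneg)
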